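/- Let G be a finite group with m = m(G), let (g₁, …, g_m) be an irredundant generating sequence of G, and let (M₁, …, M_m) be a sequence of maximal subgroups of G corresponding to (g₁, …, g_m). Then every element x ≠ 1 of the radical ⋂ᵢ Mᵢ is a witness to failure for G. -/
import Mathlib


section Defs

variable {G : Type*} [Group G]

/-- `g` is a generating sequence of `G`: the set of its entries generates `G`. -/
def IsGenSeq {n : ℕ} (g : Fin n → G) : Prop :=
  Subgroup.closure (Set.range g) = ⊤

/-- `g` is irredundant: for each `i`, the entries other than `g i` do not generate `G`. -/
def IsIrred {n : ℕ} (g : Fin n → G) : Prop :=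
  ∀ i : Fin n, Subgroup.closure (g '' {j | j ≠ i}) ≠ ⊤

/-- `m(G)`: the largest length of an irredundant generating sequence of `G`. -/
noncomputable def maxIrredLen (G : Type*) [Group G] : ℕ :=
  sSup {n | ∃ g : Fin n → G, IsGenSeq g ∧ IsIrred g}

/-- `G` satisfies the replacement property. -/
def ReplacementProperty (G : Type*) [Group G] : Prop :=
  ∀ g : Fin (maxIrredLen G) → G, IsGenSeq g → IsIrred g →
    ∀ x : G, x ≠ 1 → ∃ i, IsGenSeq (Function.update g i x)

/-- `x` is a witness to failure of the replacement property for `G`. -/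
def IsWitnessToFailure {G : Type*} [Group G] (x : G) : Prop :=
  x ≠ 1 ∧ ∃ g : Fin (maxIrredLen G) → G, IsGenSeq g ∧ IsIrred g ∧
    ∀ i, ¬ IsGenSeq (Function.update g i x)

/-- A family of subgroups is in general position. -/
def InGeneralPosition {n : ℕ} (H : Fin n → Subgroup G) : Prop :=
  ∀ j, ¬ ((⨅ i ∈ ({j}ᶜ : Set (Fin n)), H i) ≤ H j)

/-- The sequence of subgroups `M` corresponds to the sequence of elements `g`. -/
def Corresponds {n : ℕ} (M : Fin n → Subgroup G) (g : Fin n → G) : Prop :=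
  (∀ i j, j ≠ i → g i ∈ M j) ∧ ∀ i, g i ∉ M i

end Defs

/-- `PSL(2,p)`. -/
abbrev PSL (p : ℕ) : Type := Matrix.ProjectiveSpecialLinearGroup (Fin 2) (ZMod p)

theorem radical_element_is_witness {G : Type*} [Group G] [Finite G]
    (g : Fin (maxIrredLen G) → G) (hgen : IsGenSeq g) (hirr : IsIrred g)
    (M : Fin (maxIrredLen G) → Subgroup G) (hmax : ∀ i, IsCoatom (M i))
    (hcorr : Corresponds M g)
    (x : G) (hx : x ∈ ⨅ i, M i) (hx1 : x ≠ 1) :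
    IsWitnessToFailure x := by
  refine ⟨hx1, g, hgen, hirr, fun i h => ?_⟩
  have hle : Subgroup.closure (Set.range (Function.update g i x)) ≤ M i := by
    refine (Subgroup.closure_le (M i)).2 ?_
    rintro y ⟨j, rfl⟩
    by_cases hj : j = i
    · subst hj; simpa using Subgroup.mem_iInf.1 hx j
    · rw [Function.update_of_ne hj]; exact hcorr.1 j i (Ne.symm hj)
  exact (hmax i).1 (top_unique (h ▸ hle))
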